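/- Let 𝒜 be a positive definite self-adjoint operator on a Hilbert space H and suppose ê_U, ê_V : [0,T] → D(𝒜) are C¹ and satisfy ê_V' + 𝒜ê_U = ℛ₁ + ℛ_f, ê_U' - ê_V = ℛ₂ with ℛ₂ valued in D(𝒜). Then sup_{t∈[0,T]} |||(ê_U(t), ê_V(t))|||² ≤ 2|||(ê_U(0), ê_V(0))|||² + 4(∫₀^T |||(ℛ₂(t), ℛ₁(t)+ℛ_f(t))||| dt)², where |||(φ,ψ)|||² = ‖𝒜^{1/2}φ‖² + ‖ψ‖². -/

import Mathlib

open scoped RealInnerProductSpace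
open UniformSpace MeasureTheory intervalIntegral Set

noncomputable section AuxMoll

variable {H : Type*} [NormedAddCommGroup H] [InnerProductSpace ℝ H]

namespace APosteriori

/-- the completion -/
abbrev K (H : Type*) [NormedAddCommGroup H] [InnerProductSpace ℝ H] := Completion H

/-- the `L²` product of two copies of the completion -/
abbrev P2 (H : Type*) [NormedAddCommGroup H] [InnerProductSpace ℝ H] :=
  WithLp 2 (K H × K H)

/-- embedding into the completion as a continuous linear map -/
def iota : H →L[ℝ] K H := Completion.toComplL

@[simp] lemma inner_iota (x y : H) : ⟪iota x, iota y⟫ = ⟪x, y⟫ := by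
  simp [iota, Completion.toComplL, Completion.inner_coe]

@[simp] lemma norm_iota (x : H) : ‖iota (H := H) x‖ = ‖x‖ := by
  simp [iota, Completion.toComplL]

/-- product equivalence -/
def prodE : P2 H ≃L[ℝ] (K H) × (K H) := WithLp.prodContinuousLinearEquiv 2 ℝ _ _

def fstL : P2 H →L[ℝ] K H :=
  (ContinuousLinearMap.fst ℝ _ _).comp (prodE (H := H)).toContinuousLinearMap

def sndL : P2 H →L[ℝ] K H :=
  (ContinuousLinearMap.snd ℝ _ _).comp (prodE (H := H)).toContinuousLinearMap

/-- pairing of two maps -/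
def pairL (f g : K H →L[ℝ] K H) : K H →L[ℝ] P2 H :=
  ((prodE (H := H)).symm.toContinuousLinearMap).comp (f.prod g)

@[simp] lemma fstL_pairL (f g : K H →L[ℝ] K H) (z : K H) :
    fstL (pairL f g z) = f z := by
  simp [fstL, pairL, prodE]

@[simp] lemma sndL_pairL (f g : K H →L[ℝ] K H) (z : K H) :
    sndL (pairL f g z) = g z := by
  simp [sndL, pairL, prodE]

lemma inner_P2 (p q : P2 H) : ⟪p, q⟫ = ⟪fstL p, fstL q⟫ + ⟪sndL p, sndL q⟫ := by
  simp [fstL, sndL, prodE, WithLp.prod_inner_apply]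

variable (S : H →ₗ[ℝ] H) (μ : ℝ)

/-- the (scaled) graph map -/
def Tmap : H →ₗ[ℝ] P2 H :=
  ((prodE (H := H)).symm.toLinearEquiv.toLinearMap).comp
    ((μ • (iota (H := H)).toLinearMap).prod
      ((iota (H := H)).toLinearMap.comp S))

@[simp] lemma fstL_Tmap (x : H) : fstL (Tmap S μ x) = μ • iota x := rfl

@[simp] lemma sndL_Tmap (x : H) : sndL (Tmap S μ x) = iota (S x) := rfl

/-- closure of the graph -/
def G : Submodule ℝ (P2 H) := (LinearMap.range (Tmap S μ)).topologicalClosure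

instance : CompleteSpace (G S μ) :=
  (Submodule.isClosed_topologicalClosure _).completeSpace_coe

lemma Tmap_mem_G (x : H) : Tmap S μ x ∈ G S μ :=
  Submodule.le_topologicalClosure _ (LinearMap.mem_range_self _ x)

/-- projection onto the closed graph -/
def projG : P2 H →L[ℝ] P2 H :=
  (G S μ).subtypeL.comp (Submodule.orthogonalProjectionOnto (G S μ))

lemma projG_mem (p : P2 H) : projG S μ p ∈ G S μ := by
  simp [projG]

lemma projG_inner_eq_zero (p : P2 H) {w : P2 H} (hw : w ∈ G S μ) :
    ⟪p - projG S μ p, w⟫ = 0 :=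
  (G S μ).starProjection_inner_eq_zero p w hw

lemma projG_min (p : P2 H) {q : P2 H} (hq : q ∈ G S μ) :
    ‖p - projG S μ p‖ ≤ ‖p - q‖ := by
  have h0 : ⟪p - projG S μ p, projG S μ p - q⟫ = 0 :=
    projG_inner_eq_zero S μ p (Submodule.sub_mem _ (projG_mem S μ p) hq)
  have hdecomp : p - q = (p - projG S μ p) + (projG S μ p - q) := by abel
  have := norm_add_sq_real (p - projG S μ p) (projG S μ p - q)
  rw [h0] at this
  nlinarith [norm_nonneg (p - projG S μ p), norm_nonneg (p - q),
    norm_nonneg (projG S μ p - q), hdecomp ▸ this]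

/-- the embedding z ↦ (μ z, 0) -/
def emb : K H →L[ℝ] P2 H := pairL (μ • ContinuousLinearMap.id ℝ (K H)) 0

@[simp] lemma fstL_emb (z : K H) : fstL (emb (H := H) μ z) = μ • z := by
  simp [emb]

@[simp] lemma sndL_emb (z : K H) : sndL (emb (H := H) μ z) = 0 := by
  simp [emb]

/-- mollifier `M = μ²(μ² + S*S)⁻¹` -/
def Mop : K H →L[ℝ] K H := μ⁻¹ • (fstL.comp ((projG S μ).comp (emb μ)))

/-- `N = S̄ M` -/
def Nop : K H →L[ℝ] K H := sndL.comp ((projG S μ).comp (emb μ))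

/-- `Φ = (μ(1-M), -N)`; its Gram form is `μ²⟪(1-M)z, z'⟫`. -/
def Phi : K H →L[ℝ] P2 H := emb μ - (projG S μ).comp (emb μ)

/-- `Ψ = (M, μ⁻¹N)`; its Gram form is `⟪Mz, z'⟫`. -/
def Psi : K H →L[ℝ] P2 H := pairL (Mop S μ) (μ⁻¹ • Nop S μ)

lemma fstL_Phi (hμ : 0 < μ) (z : K H) :
    fstL (Phi S μ z) = μ • (z - Mop S μ z) := by
  have : fstL ((projG S μ) (emb μ z)) = μ • Mop S μ z := by
    simp [Mop, smul_smul, mul_inv_cancel₀ hμ.ne']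
  simp [Phi, this, smul_sub]

lemma sndL_Phi (z : K H) : sndL (Phi S μ z) = - Nop S μ z := by
  simp [Phi, Nop]

lemma Phi_apply (z : K H) : Phi S μ z = emb μ z - projG S μ (emb μ z) := rfl

lemma fstL_projG_emb (hμ : 0 < μ) (z : K H) :
    fstL (projG S μ (emb μ z)) = μ • Mop S μ z := by
  simp [Mop, smul_smul, mul_inv_cancel₀ hμ.ne']

lemma sndL_projG_emb (z : K H) : sndL (projG S μ (emb μ z)) = Nop S μ z := rfl

lemma gram_Phi (hμ : 0 < μ) (z z' : K H) :
    ⟪Phi S μ z, Phi S μ z'⟫ = μ ^ 2 * ⟪z - Mop S μ z, z'⟫ := by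
  have h1 : ⟪Phi S μ z, projG S μ (emb μ z')⟫ = 0 := by
    rw [Phi_apply]
    exact projG_inner_eq_zero S μ _ (projG_mem S μ _)
  have h2 : ⟪Phi S μ z, Phi S μ z'⟫ = ⟪Phi S μ z, emb μ z'⟫ := by
    rw [Phi_apply S μ z', inner_sub_right, h1, sub_zero]
  rw [h2, inner_P2, fstL_Phi S μ hμ, sndL_Phi, fstL_emb, sndL_emb,
    real_inner_smul_left, real_inner_smul_right, inner_zero_right]
  ring

lemma gram_NN (hμ : 0 < μ) (z z' : K H) :
    ⟪Nop S μ z, Nop S μ z'⟫ = μ ^ 2 * ⟪z - Mop S μ z, Mop S μ z'⟫ := by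
  have h1 : ⟪Phi S μ z, projG S μ (emb μ z')⟫ = 0 := by
    rw [Phi_apply]
    exact projG_inner_eq_zero S μ _ (projG_mem S μ _)
  rw [inner_P2, fstL_Phi S μ hμ, sndL_Phi, fstL_projG_emb S μ hμ, sndL_projG_emb,
    real_inner_smul_left, real_inner_smul_right, inner_neg_left] at h1
  nlinarith [h1]

lemma Mop_symm (hμ : 0 < μ) (z z' : K H) :
    ⟪Mop S μ z, z'⟫ = ⟪z, Mop S μ z'⟫ := by
  have h1 := gram_NN S μ hμ z z'
  have h2 := gram_NN S μ hμ z' z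
  rw [inner_sub_left] at h1 h2
  have hN : ⟪Nop S μ z, Nop S μ z'⟫ = ⟪Nop S μ z', Nop S μ z⟫ := real_inner_comm _ _
  have hM : ⟪Mop S μ z, Mop S μ z'⟫ = ⟪Mop S μ z', Mop S μ z⟫ := real_inner_comm _ _
  have hkey : μ ^ 2 * ⟪z, Mop S μ z'⟫ = μ ^ 2 * ⟪z', Mop S μ z⟫ := by
    linear_combination (-1 : ℝ) * h1 + h2 + hN + μ ^ 2 * hM
  have hzz : ⟪z, Mop S μ z'⟫ = ⟪z', Mop S μ z⟫ :=
    mul_left_cancel₀ (pow_ne_zero 2 hμ.ne') hkey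
  linarith [real_inner_comm (Mop S μ z) z', hzz]

lemma gram_Psi (hμ : 0 < μ) (z z' : K H) :
    ⟪Psi S μ z, Psi S μ z'⟫ = ⟪Mop S μ z, z'⟫ := by
  have hNN := gram_NN S μ hμ z z'
  have hμ2 : (μ:ℝ) ≠ 0 := hμ.ne'
  rw [Psi, inner_P2, fstL_pairL, sndL_pairL, fstL_pairL, sndL_pairL,
    ContinuousLinearMap.smul_apply, ContinuousLinearMap.smul_apply,
    real_inner_smul_left, real_inner_smul_right, hNN, inner_sub_left]
  have : μ⁻¹ * (μ⁻¹ * (μ ^ 2 * (⟪z, Mop S μ z'⟫ - ⟪Mop S μ z, Mop S μ z'⟫)))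
      = ⟪z, Mop S μ z'⟫ - ⟪Mop S μ z, Mop S μ z'⟫ := by
    field_simp
  rw [this]
  have hsym := Mop_symm S μ hμ z z'
  linarith

lemma orth1 (hμ : 0 < μ) (z : K H) (x : H) :
    μ ^ 2 * ⟪z - Mop S μ z, iota x⟫ = ⟪Nop S μ z, iota (S x)⟫ := by
  have h0 : ⟪Phi S μ z, Tmap S μ x⟫ = 0 := by
    rw [Phi_apply]
    exact projG_inner_eq_zero S μ _ (Tmap_mem_G S μ x)
  rw [inner_P2, fstL_Phi S μ hμ, sndL_Phi, fstL_Tmap, sndL_Tmap,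
    real_inner_smul_left, real_inner_smul_right, inner_neg_left] at h0
  nlinarith [h0]

lemma K3 (hSsym : ∀ x y : H, ⟪S x, y⟫ = ⟪x, S y⟫) (hμ : 0 < μ) (z : K H) (w : H) :
    ⟪Nop S μ z, iota w⟫ = ⟪Mop S μ z, iota (S w)⟫ := by
  have hset : (G S μ : Set (P2 H)) ⊆
      {p | μ * ⟪sndL p, iota (H := H) w⟫ = ⟪fstL p, iota (S w)⟫} := by
    rw [G, Submodule.topologicalClosure_coe]
    apply closure_minimal
    · rintro p ⟨x, rfl⟩
      simp only [Set.mem_setOf_eq, fstL_Tmap, sndL_Tmap, inner_iota,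
        real_inner_smul_left]
      rw [hSsym x w]
    · apply isClosed_eq
      · exact continuous_const.mul (((sndL (H := H)).continuous).inner continuous_const)
      · exact ((fstL (H := H)).continuous).inner continuous_const
  have hp := hset (projG_mem S μ (emb μ z))
  simp only [Set.mem_setOf_eq, sndL_projG_emb, fstL_projG_emb S μ hμ,
    real_inner_smul_left] at hp
  exact mul_left_cancel₀ hμ.ne' hp

lemma norm_Phi_sq (hμ : 0 < μ) (z : K H) :
    ‖Phi S μ z‖ ^ 2 = μ ^ 2 * ‖z - Mop S μ z‖ ^ 2 + ‖Nop S μ z‖ ^ 2 := by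
  have h := inner_P2 (Phi S μ z) (Phi S μ z)
  rw [fstL_Phi S μ hμ, sndL_Phi, real_inner_smul_left, real_inner_smul_right,
    inner_neg_left, inner_neg_right, neg_neg,
    real_inner_self_eq_norm_sq, real_inner_self_eq_norm_sq,
    real_inner_self_eq_norm_sq] at h
  rw [h]
  ring

lemma phi_psi (hμ : 0 < μ) (z : K H) :
    ‖Phi S μ z‖ ^ 2 = μ ^ 2 * (‖z‖ ^ 2 - ‖Psi S μ z‖ ^ 2) := by
  have h1 : ‖Psi S μ z‖ ^ 2 = ⟪Mop S μ z, z⟫ := by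
    rw [← real_inner_self_eq_norm_sq, gram_Psi S μ hμ]
  have h2 : ‖Phi S μ z‖ ^ 2 = μ ^ 2 * (⟪z, z⟫ - ⟪Mop S μ z, z⟫) := by
    rw [← real_inner_self_eq_norm_sq, gram_Phi S μ hμ, inner_sub_left]
  rw [h2, h1, real_inner_self_eq_norm_sq]

lemma norm_Phi_le (hμ : 0 < μ) (w : H) :
    ‖Phi S μ (iota w)‖ ≤ ‖S w‖ := by
  have hmin := projG_min S μ (emb μ (iota w)) (Tmap_mem_G S μ w)
  rw [← Phi_apply] at hmin
  have hfst : fstL (emb μ (iota w) - Tmap S μ w) = 0 := by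
    rw [map_sub, fstL_emb, fstL_Tmap, sub_self]
  have hsnd : sndL (emb μ (iota w) - Tmap S μ w) = - iota (S w) := by
    rw [map_sub, sndL_emb, sndL_Tmap, zero_sub]
  have hnorm : ‖emb μ (iota w) - Tmap S μ w‖ ^ 2 = ‖S w‖ ^ 2 := by
    rw [← real_inner_self_eq_norm_sq, inner_P2, hfst, hsnd, inner_zero_left,
      inner_neg_left, inner_neg_right, neg_neg, inner_iota,
      real_inner_self_eq_norm_sq]
    ring
  have hnorm' : ‖emb μ (iota w) - Tmap S μ w‖ = ‖S w‖ := by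
    have := congrArg Real.sqrt hnorm
    rwa [Real.sqrt_sq (norm_nonneg _), Real.sqrt_sq (norm_nonneg _)] at this
  rw [hnorm'] at hmin
  exact hmin

lemma norm_Psi_sq_le (hμ : 0 < μ) (z : K H) : ‖Psi S μ z‖ ^ 2 ≤ ‖z‖ ^ 2 := by
  have h := phi_psi S μ hμ z
  have hp : (0:ℝ) < μ ^ 2 := by positivity
  by_contra hlt
  push_neg at hlt
  nlinarith [sq_nonneg ‖Phi S μ z‖]

lemma norm_Psi_le (hμ : 0 < μ) (z : K H) : ‖Psi S μ z‖ ≤ ‖z‖ := by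
  have h0 := norm_Psi_sq_le S μ hμ z
  by_contra hlt
  push_neg at hlt
  nlinarith [norm_nonneg z, norm_nonneg (Psi S μ z)]

lemma conv_Phi (hSsym : ∀ x y : H, ⟪S x, y⟫ = ⟪x, S y⟫) (hμ : 0 < μ) (w : H) :
    μ * ‖S w‖ ^ 2 ≤ μ * (‖Phi S μ (iota w)‖ * ‖S w‖) + ‖S (S w)‖ * ‖S w‖ := by
  have h1 : ⟪Nop S μ (iota w), iota (S w)⟫ = ⟪Mop S μ (iota w), iota (S (S w))⟫ :=
    K3 S μ hSsym hμ (iota w) (S w)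
  have h2 : ⟪Mop S μ (iota w), iota (S (S w))⟫
      = ⟪iota (H := H) w, iota (S (S w))⟫ - ⟪iota w - Mop S μ (iota w), iota (S (S w))⟫ := by
    rw [inner_sub_left]
    ring
  have h3 : ⟪iota (H := H) w, iota (S (S w))⟫ = ‖S w‖ ^ 2 := by
    rw [inner_iota, ← hSsym w (S w), real_inner_self_eq_norm_sq]
  have h4 : |⟪iota w - Mop S μ (iota w), iota (S (S w))⟫|
      ≤ ‖iota w - Mop S μ (iota w)‖ * ‖S (S w)‖ := by
    have := abs_real_inner_le_norm (iota w - Mop S μ (iota w)) (iota (S (S w)))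
    rwa [norm_iota] at this
  have h5 : μ * ‖iota w - Mop S μ (iota w)‖ ≤ ‖S w‖ := by
    have hsq := norm_Phi_sq S μ hμ (iota w)
    have hle := norm_Phi_le S μ hμ w
    nlinarith [norm_nonneg (Nop S μ (iota w)), norm_nonneg (iota w - Mop S μ (iota w)),
      norm_nonneg (Phi S μ (iota w)), norm_nonneg (S w), mul_pos hμ hμ, hμ]
  have h6 : ⟪Nop S μ (iota w), iota (S w)⟫ ≤ ‖Phi S μ (iota w)‖ * ‖S w‖ := by
    have hN : ‖Nop S μ (iota w)‖ ≤ ‖Phi S μ (iota w)‖ := by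
      have hsq := norm_Phi_sq S μ hμ (iota w)
      nlinarith [norm_nonneg (Nop S μ (iota w)), norm_nonneg (Phi S μ (iota w)),
        sq_nonneg (μ * ‖iota w - Mop S μ (iota w)‖)]
    calc ⟪Nop S μ (iota w), iota (S w)⟫ ≤ ‖Nop S μ (iota w)‖ * ‖iota (S w)‖ :=
          real_inner_le_norm _ _
      _ = ‖Nop S μ (iota w)‖ * ‖S w‖ := by rw [norm_iota]
      _ ≤ ‖Phi S μ (iota w)‖ * ‖S w‖ :=
          mul_le_mul_of_nonneg_right hN (norm_nonneg _)
  have h7 : μ * ⟪iota w - Mop S μ (iota w), iota (S (S w))⟫ ≤ ‖S w‖ * ‖S (S w)‖ := by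
    nlinarith [le_abs_self ⟪iota w - Mop S μ (iota w), iota (S (S w))⟫,
      mul_le_mul_of_nonneg_left h4 hμ.le, h5, norm_nonneg (S (S w)),
      norm_nonneg (iota w - Mop S μ (iota w)), hμ]
  have h123 : ⟪Nop S μ (iota w), iota (S w)⟫
      = ‖S w‖ ^ 2 - ⟪iota w - Mop S μ (iota w), iota (S (S w))⟫ := by
    rw [h1, h2, h3]
  have h6' := mul_le_mul_of_nonneg_left h6 hμ.le
  rw [h123, mul_sub] at h6'
  nlinarith [h6', h7]

/-- the rotation-cancellation identity -/
lemma rot (hSsym : ∀ x y : H, ⟪S x, y⟫ = ⟪x, S y⟫) (hμ : 0 < μ) (u v : H) :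
    ⟪Phi S μ (iota u), Phi S μ (iota v)⟫
      = ⟪Psi S μ (iota v), Psi S μ (iota (S (S u)))⟫ := by
  have h1 : ⟪Phi S μ (iota u), Phi S μ (iota v)⟫
      = μ ^ 2 * ⟪iota u - Mop S μ (iota u), iota v⟫ := gram_Phi S μ hμ _ _
  have h2 : ⟪Psi S μ (iota v), Psi S μ (iota (S (S u)))⟫
      = ⟪Mop S μ (iota v), iota (S (S u))⟫ := gram_Psi S μ hμ _ _
  have h3 : ⟪Mop S μ (iota v), iota (S (S u))⟫ = ⟪Nop S μ (iota v), iota (S u)⟫ :=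
    (K3 S μ hSsym hμ (iota v) (S u)).symm
  have h4 : ⟪Nop S μ (iota v), iota (S u)⟫
      = μ ^ 2 * ⟪iota v - Mop S μ (iota v), iota u⟫ := (orth1 S μ hμ (iota v) u).symm
  rw [h1, h2, h3, h4, inner_sub_left, inner_sub_left]
  have hc1 : ⟪iota (H := H) u, iota v⟫ = ⟪iota (H := H) v, iota u⟫ := real_inner_comm _ _
  have hc2 : ⟪Mop S μ (iota u), iota v⟫ = ⟪Mop S μ (iota v), iota u⟫ := by
    rw [Mop_symm S μ hμ, real_inner_comm]
  rw [hc1, hc2]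

/-- elementary ℝ² Cauchy–Schwarz -/
lemma l2cs {a b c d : ℝ} (ha : 0 ≤ a) (hb : 0 ≤ b) (hc : 0 ≤ c) (hd : 0 ≤ d) :
    a * b + c * d ≤ Real.sqrt (a ^ 2 + c ^ 2) * Real.sqrt (b ^ 2 + d ^ 2) := by
  have h1 : Real.sqrt (a ^ 2 + c ^ 2) ^ 2 = a ^ 2 + c ^ 2 :=
    Real.sq_sqrt (by positivity)
  have h2 : Real.sqrt (b ^ 2 + d ^ 2) ^ 2 = b ^ 2 + d ^ 2 :=
    Real.sq_sqrt (by positivity)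
  have h3 := Real.sqrt_nonneg (a ^ 2 + c ^ 2)
  have h4 := Real.sqrt_nonneg (b ^ 2 + d ^ 2)
  by_contra hlt
  push_neg at hlt
  nlinarith [sq_nonneg (a * d - c * b), mul_nonneg (mul_nonneg ha hb) (mul_nonneg hc hd),
    mul_nonneg h3 h4]

/-- Grönwall estimate for the mollified energy. -/
lemma gronwall_step
    (A : H →ₗ[ℝ] H)
    (hSsym : ∀ x y : H, ⟪S x, y⟫ = ⟪x, S y⟫)
    (hSS : ∀ x : H, S (S x) = A x)
    (hμ : 0 < μ) (T : ℝ) (hT : 0 ≤ T)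
    (eU eV eU' eV' R1 R2 Rf : ℝ → H)
    (hU : ∀ t ∈ Set.Icc (0 : ℝ) T, HasDerivAt eU (eU' t) t)
    (hV : ∀ t ∈ Set.Icc (0 : ℝ) T, HasDerivAt eV (eV' t) t)
    (heq1 : ∀ t ∈ Set.Icc (0 : ℝ) T, eV' t + A (eU t) = R1 t + Rf t)
    (heq2 : ∀ t ∈ Set.Icc (0 : ℝ) T, eU' t - eV t = R2 t)
    (hRint : IntervalIntegrable
      (fun s => Real.sqrt (‖S (R2 s)‖ ^ 2 + ‖R1 s + Rf s‖ ^ 2))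
      MeasureTheory.volume 0 T)
    (ε : ℝ) (hε : 0 < ε) (t : ℝ) (ht : t ∈ Set.Icc (0 : ℝ) T) :
    ‖Phi S μ (iota (eU t))‖ ^ 2 + ‖Psi S μ (iota (eV t))‖ ^ 2 + ε ≤
      (Real.sqrt (‖Phi S μ (iota (eU 0))‖ ^ 2 + ‖Psi S μ (iota (eV 0))‖ ^ 2 + ε)
        + ∫ s in (0:ℝ)..T, Real.sqrt (‖S (R2 s)‖ ^ 2 + ‖R1 s + Rf s‖ ^ 2)) ^ 2 := by
  set ρ : ℝ → ℝ := fun s => Real.sqrt (‖S (R2 s)‖ ^ 2 + ‖R1 s + Rf s‖ ^ 2) with hρ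
  set Efun : ℝ → ℝ := fun s =>
    ⟪Phi S μ (iota (eU s)), Phi S μ (iota (eU s))⟫
      + ⟪Psi S μ (iota (eV s)), Psi S μ (iota (eV s))⟫ with hEfun
  set D : ℝ → ℝ := fun s =>
    2 * ⟪Phi S μ (iota (eU s)), Phi S μ (iota (R2 s))⟫
      + 2 * ⟪Psi S μ (iota (eV s)), Psi S μ (iota (R1 s + Rf s))⟫ with hD
  have hEnorm : ∀ s, Efun s
      = ‖Phi S μ (iota (eU s))‖ ^ 2 + ‖Psi S μ (iota (eV s))‖ ^ 2 := by
    intro s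
    simp only [hEfun]
    rw [real_inner_self_eq_norm_sq, real_inner_self_eq_norm_sq]
  have hEnn : ∀ s, 0 ≤ Efun s := by
    intro s
    rw [hEnorm s]
    positivity
  -- derivative of the mollified energy
  have hder : ∀ s ∈ Set.Icc (0:ℝ) T, HasDerivAt Efun (D s) s := by
    intro s hs
    have hgU : HasDerivAt (fun y => Phi S μ (iota (eU y))) (Phi S μ (iota (eU' s))) s := by
      have h := ((Phi S μ).comp (iota (H := H))).hasFDerivAt.comp_hasDerivAt s (hU s hs)
      exact h
    have hgV : HasDerivAt (fun y => Psi S μ (iota (eV y))) (Psi S μ (iota (eV' s))) s := by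
      have h := ((Psi S μ).comp (iota (H := H))).hasFDerivAt.comp_hasDerivAt s (hV s hs)
      exact h
    have hd := (HasDerivAt.inner ℝ hgU hgU).add (HasDerivAt.inner ℝ hgV hgV)
    have hval :
        (⟪Phi S μ (iota (eU s)), Phi S μ (iota (eU' s))⟫
          + ⟪Phi S μ (iota (eU' s)), Phi S μ (iota (eU s))⟫)
        + (⟪Psi S μ (iota (eV s)), Psi S μ (iota (eV' s))⟫
          + ⟪Psi S μ (iota (eV' s)), Psi S μ (iota (eV s))⟫) = D s := by
      simp only [hD]
      rw [← heq2 s hs, ← heq1 s hs, ← hSS (eU s)]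
      simp only [map_add, map_sub, inner_add_right, inner_sub_right, inner_add_left,
        inner_sub_left]
      have hrot := rot S μ hSsym hμ (eU s) (eV s)
      have c1 : ⟪Phi S μ (iota (eU' s)), Phi S μ (iota (eU s))⟫
          = ⟪Phi S μ (iota (eU s)), Phi S μ (iota (eU' s))⟫ := real_inner_comm _ _
      have c2 : ⟪Phi S μ (iota (eV s)), Phi S μ (iota (eU s))⟫
          = ⟪Phi S μ (iota (eU s)), Phi S μ (iota (eV s))⟫ := real_inner_comm _ _
      have c3 : ⟪Psi S μ (iota (eV' s)), Psi S μ (iota (eV s))⟫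
          = ⟪Psi S μ (iota (eV s)), Psi S μ (iota (eV' s))⟫ := real_inner_comm _ _
      have c4 : ⟪Psi S μ (iota (S (S (eU s)))), Psi S μ (iota (eV s))⟫
          = ⟪Psi S μ (iota (eV s)), Psi S μ (iota (S (S (eU s))))⟫ := real_inner_comm _ _
      linarith [hrot, c1, c2, c3, c4]
    have hfun : Efun = fun y =>
        ⟪Phi S μ (iota (eU y)), Phi S μ (iota (eU y))⟫
          + ⟪Psi S μ (iota (eV y)), Psi S μ (iota (eV y))⟫ := hEfun
    rw [hfun]
    exact hval ▸ hd
  -- pointwise bound on the derivative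
  have hbound : ∀ s ∈ Set.Icc (0:ℝ) T, |D s| ≤ 2 * Real.sqrt (Efun s) * ρ s := by
    intro s hs
    have h1 : |⟪Phi S μ (iota (eU s)), Phi S μ (iota (R2 s))⟫|
        ≤ ‖Phi S μ (iota (eU s))‖ * ‖S (R2 s)‖ := by
      refine (abs_real_inner_le_norm _ _).trans ?_
      exact mul_le_mul_of_nonneg_left (norm_Phi_le S μ hμ (R2 s)) (norm_nonneg _)
    have h2 : |⟪Psi S μ (iota (eV s)), Psi S μ (iota (R1 s + Rf s))⟫|
        ≤ ‖Psi S μ (iota (eV s))‖ * ‖R1 s + Rf s‖ := by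
      refine (abs_real_inner_le_norm _ _).trans ?_
      refine mul_le_mul_of_nonneg_left ?_ (norm_nonneg _)
      exact (norm_Psi_le S μ hμ _).trans (le_of_eq (norm_iota _))
    have hcs := l2cs (norm_nonneg (Phi S μ (iota (eU s)))) (norm_nonneg (S (R2 s)))
      (norm_nonneg (Psi S μ (iota (eV s)))) (norm_nonneg (R1 s + Rf s))
    have habs : |D s| ≤ 2 * (‖Phi S μ (iota (eU s))‖ * ‖S (R2 s)‖
        + ‖Psi S μ (iota (eV s))‖ * ‖R1 s + Rf s‖) := by
      simp only [hD]
      calc |2 * ⟪Phi S μ (iota (eU s)), Phi S μ (iota (R2 s))⟫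
            + 2 * ⟪Psi S μ (iota (eV s)), Psi S μ (iota (R1 s + Rf s))⟫|
          ≤ |2 * ⟪Phi S μ (iota (eU s)), Phi S μ (iota (R2 s))⟫|
            + |2 * ⟪Psi S μ (iota (eV s)), Psi S μ (iota (R1 s + Rf s))⟫| := abs_add_le _ _
        _ ≤ 2 * (‖Phi S μ (iota (eU s))‖ * ‖S (R2 s)‖
            + ‖Psi S μ (iota (eV s))‖ * ‖R1 s + Rf s‖) := by
            rw [abs_mul, abs_mul, abs_two]
            linarith [h1, h2]
    simp only [hρ, hEnorm s]
    calc |D s| ≤ 2 * (‖Phi S μ (iota (eU s))‖ * ‖S (R2 s)‖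
        + ‖Psi S μ (iota (eV s))‖ * ‖R1 s + Rf s‖) := habs
      _ ≤ 2 * (Real.sqrt (‖Phi S μ (iota (eU s))‖ ^ 2 + ‖Psi S μ (iota (eV s))‖ ^ 2)
          * Real.sqrt (‖S (R2 s)‖ ^ 2 + ‖R1 s + Rf s‖ ^ 2)) := by linarith [hcs]
      _ = 2 * Real.sqrt (‖Phi S μ (iota (eU s))‖ ^ 2 + ‖Psi S μ (iota (eV s))‖ ^ 2)
          * Real.sqrt (‖S (R2 s)‖ ^ 2 + ‖R1 s + Rf s‖ ^ 2) := by ring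
  -- the auxiliary square-root function
  set φ : ℝ → ℝ := fun s => Real.sqrt (Efun s + ε) with hφ
  have hφpos : ∀ s, 0 < Efun s + ε := fun s => add_pos_of_nonneg_of_pos (hEnn s) hε
  have hφnn : ∀ s, 0 < φ s := fun s => Real.sqrt_pos.mpr (hφpos s)
  have hφd : ∀ s ∈ Set.Icc (0:ℝ) T, HasDerivAt φ (D s / (2 * φ s)) s := by
    intro s hs
    have h := ((hder s hs).add_const ε).sqrt (ne_of_gt (hφpos s))
    simpa [hφ] using h
  have hsqrtle : ∀ s, Real.sqrt (Efun s) ≤ φ s := by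
    intro s
    simp only [hφ]
    exact Real.sqrt_le_sqrt (by linarith [hε])
  have habsd : ∀ s ∈ Set.Icc (0:ℝ) T, |deriv φ s| ≤ ρ s := by
    intro s hs
    rw [(hφd s hs).deriv, abs_div, abs_of_pos (by linarith [hφnn s] : (0:ℝ) < 2 * φ s)]
    rw [div_le_iff₀ (by linarith [hφnn s])]
    have := hbound s hs
    have hρnn : 0 ≤ ρ s := Real.sqrt_nonneg _
    nlinarith [hsqrtle s, Real.sqrt_nonneg (Efun s), hφnn s]
  -- integrability
  have hsub : Set.uIcc (0:ℝ) t ⊆ Set.uIcc (0:ℝ) T := by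
    rw [Set.uIcc_of_le ht.1, Set.uIcc_of_le hT]
    exact Set.Icc_subset_Icc le_rfl ht.2
  have hρt : IntervalIntegrable ρ MeasureTheory.volume 0 t := hRint.mono_set hsub
  have hφint : IntervalIntegrable (deriv φ) MeasureTheory.volume 0 t := by
    refine hρt.mono_fun' ((measurable_deriv φ).aestronglyMeasurable) ?_
    rw [Set.uIoc_of_le ht.1]
    refine (MeasureTheory.ae_restrict_iff' measurableSet_Ioc).mpr
      (Filter.Eventually.of_forall fun s hs => ?_)
    have hsIcc : s ∈ Set.Icc (0:ℝ) T := ⟨hs.1.le, hs.2.trans ht.2⟩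
    show ‖deriv φ s‖ ≤ ρ s
    rw [Real.norm_eq_abs]
    exact habsd s hsIcc
  -- fundamental theorem of calculus and monotonicity
  have hFTC : ∫ s in (0:ℝ)..t, deriv φ s = φ t - φ 0 := by
    refine intervalIntegral.integral_eq_sub_of_hasDerivAt (fun s hs => ?_) hφint
    rw [Set.uIcc_of_le ht.1] at hs
    have hsIcc : s ∈ Set.Icc (0:ℝ) T := ⟨hs.1, hs.2.trans ht.2⟩
    exact (hφd s hsIcc).differentiableAt.hasDerivAt
  have hImono : ∫ s in (0:ℝ)..t, deriv φ s ≤ ∫ s in (0:ℝ)..t, ρ s := by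
    refine intervalIntegral.integral_mono_on ht.1 hφint hρt (fun s hs => ?_)
    have hsIcc : s ∈ Set.Icc (0:ℝ) T := ⟨hs.1, hs.2.trans ht.2⟩
    exact (le_abs_self _).trans (habsd s hsIcc)
  have hIT : ∫ s in (0:ℝ)..t, ρ s ≤ ∫ s in (0:ℝ)..T, ρ s := by
    refine intervalIntegral.integral_mono_interval le_rfl ht.1 ht.2 ?_ hRint
    exact Filter.Eventually.of_forall fun s => Real.sqrt_nonneg _
  have hkey : φ t ≤ φ 0 + ∫ s in (0:ℝ)..T, ρ s := by
    have := hFTC ▸ hImono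
    linarith
  -- squaring
  have hsq : Efun t + ε ≤ (φ 0 + ∫ s in (0:ℝ)..T, ρ s) ^ 2 := by
    have h1 : (φ t) ^ 2 = Efun t + ε := Real.sq_sqrt (hφpos t).le
    have h2 : 0 ≤ φ t := (hφnn t).le
    nlinarith [hkey]
  have hφ0 : φ 0 = Real.sqrt (‖Phi S μ (iota (eU 0))‖ ^ 2 + ‖Psi S μ (iota (eV 0))‖ ^ 2 + ε) := by
    simp only [hφ, hEnorm 0]
  rw [← hEnorm t, ← hφ0]
  exact hsq

end APosteriori

end AuxMoll

set_option maxHeartbeats 2000000 in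
open APosteriori in
/-- Main a posteriori error estimate (Theorem 3.1): the energy norm of the reconstruction
error is controlled by its initial value and the time integral of the energy norm of the
residuals. `S` plays the role of the positive square root `𝒜^{1/2}` of `A`. -/
theorem a_posteriori_estimate {H : Type*} [NormedAddCommGroup H] [InnerProductSpace ℝ H]
    (T : ℝ) (hT : 0 ≤ T) (A S : H →ₗ[ℝ] H)
    (hAsym : ∀ x y : H, ⟪A x, y⟫ = ⟪x, A y⟫)
    (hSsym : ∀ x y : H, ⟪S x, y⟫ = ⟪x, S y⟫)
    (hSS : ∀ x : H, S (S x) = A x)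
    (c : ℝ) (hc : 0 < c) (hpos : ∀ x : H, c * ‖x‖ ^ 2 ≤ ⟪A x, x⟫)
    (eU eV eU' eV' R1 R2 Rf : ℝ → H)
    (hU : ∀ t ∈ Set.Icc (0 : ℝ) T, HasDerivAt eU (eU' t) t)
    (hV : ∀ t ∈ Set.Icc (0 : ℝ) T, HasDerivAt eV (eV' t) t)
    (heq1 : ∀ t ∈ Set.Icc (0 : ℝ) T, eV' t + A (eU t) = R1 t + Rf t)
    (heq2 : ∀ t ∈ Set.Icc (0 : ℝ) T, eU' t - eV t = R2 t)
    (hRint : IntervalIntegrable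
      (fun t => Real.sqrt (‖S (R2 t)‖ ^ 2 + ‖R1 t + Rf t‖ ^ 2))
      MeasureTheory.volume 0 T) :
    ∀ t ∈ Set.Icc (0 : ℝ) T,
      ‖S (eU t)‖ ^ 2 + ‖eV t‖ ^ 2 ≤
        2 * (‖S (eU 0)‖ ^ 2 + ‖eV 0‖ ^ 2) +
          4 * (∫ t in (0 : ℝ)..T,
            Real.sqrt (‖S (R2 t)‖ ^ 2 + ‖R1 t + Rf t‖ ^ 2)) ^ 2 := by
  intro t ht
  set I : ℝ := ∫ s in (0:ℝ)..T, Real.sqrt (‖S (R2 s)‖ ^ 2 + ‖R1 s + Rf s‖ ^ 2) with hIdef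
  have hI0 : 0 ≤ I := by
    rw [hIdef]
    exact intervalIntegral.integral_nonneg hT (fun s _ => Real.sqrt_nonneg _)
  set E0 : ℝ := ‖S (eU 0)‖ ^ 2 + ‖eV 0‖ ^ 2 with hE0def
  have hE0 : 0 ≤ E0 := by rw [hE0def]; positivity
  suffices hmain : ‖S (eU t)‖ ^ 2 + ‖eV t‖ ^ 2 ≤ (Real.sqrt E0 + I) ^ 2 by
    have hsq : Real.sqrt E0 ^ 2 = E0 := Real.sq_sqrt hE0
    nlinarith [Real.sqrt_nonneg E0, hI0, sq_nonneg (Real.sqrt E0 - I), hmain]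
  refine le_of_forall_pos_le_add fun η hη => ?_
  set B : ℝ := Real.sqrt E0 + I with hB
  have hBnn : 0 ≤ B := add_nonneg (Real.sqrt_nonneg _) hI0
  have hposB : (0:ℝ) < 2 * B + 2 := by linarith
  set δ : ℝ := min 1 ((η / (2 * B + 2)) ^ 2) with hδdef
  have hδpos : 0 < δ := lt_min one_pos (by positivity)
  have hδ1 : δ ≤ 1 := min_le_left _ _
  have hsqrtδ : Real.sqrt δ ≤ η / (2 * B + 2) := by
    calc Real.sqrt δ ≤ Real.sqrt ((η / (2 * B + 2)) ^ 2) :=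
          Real.sqrt_le_sqrt (min_le_right _ _)
      _ = η / (2 * B + 2) := Real.sqrt_sq (by positivity)
  have hδsqrt : δ ≤ Real.sqrt δ := by
    have h1 : Real.sqrt δ ≤ 1 := by
      rw [show (1:ℝ) = Real.sqrt 1 by rw [Real.sqrt_one]]
      exact Real.sqrt_le_sqrt hδ1
    nlinarith [Real.sq_sqrt hδpos.le, Real.sqrt_nonneg δ]
  set C : ℝ := 2 * ‖S (S (eU t))‖ * ‖S (eU t)‖ + ‖S (eV t)‖ ^ 2 with hC
  have hCnn : 0 ≤ C := by rw [hC]; positivity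
  set μ : ℝ := max 1 ((C + δ) / δ) with hμdef
  have hμ1 : (1:ℝ) ≤ μ := le_max_left _ _
  have hμpos : 0 < μ := lt_of_lt_of_le one_pos hμ1
  -- error bounds between the true and mollified energies at time t
  have hconva : μ * (‖S (eU t)‖ ^ 2 - ‖Phi S μ (iota (eU t))‖ ^ 2)
      ≤ 2 * ‖S (S (eU t))‖ * ‖S (eU t)‖ := by
    have hcv := conv_Phi S μ hSsym hμpos (eU t)
    have hle := norm_Phi_le S μ hμpos (eU t)
    have step : μ * (‖S (eU t)‖ ^ 2 - ‖Phi S μ (iota (eU t))‖ * ‖S (eU t)‖)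
        ≤ ‖S (S (eU t))‖ * ‖S (eU t)‖ := by
      rw [mul_sub]
      linarith [hcv]
    have hprod : 0 ≤ μ * ((‖S (eU t)‖ - ‖Phi S μ (iota (eU t))‖)
        * (‖S (eU t)‖ - ‖Phi S μ (iota (eU t))‖)) :=
      mul_nonneg hμpos.le (mul_self_nonneg _)
    nlinarith [step, hprod]
  have hconvb : μ * (‖eV t‖ ^ 2 - ‖Psi S μ (iota (eV t))‖ ^ 2) ≤ ‖S (eV t)‖ ^ 2 := by
    have hpp := phi_psi S μ hμpos (iota (eV t))
    rw [norm_iota] at hpp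
    have h1 : ‖Phi S μ (iota (eV t))‖ ^ 2 ≤ ‖S (eV t)‖ ^ 2 :=
      pow_le_pow_left₀ (norm_nonneg _) (norm_Phi_le S μ hμpos (eV t)) 2
    have h2 : ‖Psi S μ (iota (eV t))‖ ≤ ‖eV t‖ := by
      have h := norm_Psi_le S μ hμpos (iota (eV t))
      rwa [norm_iota] at h
    have h3 : 0 ≤ ‖eV t‖ ^ 2 - ‖Psi S μ (iota (eV t))‖ ^ 2 := by
      nlinarith [norm_nonneg (eV t), norm_nonneg (Psi S μ (iota (eV t)))]
    have hμd : 0 ≤ μ * (‖eV t‖ ^ 2 - ‖Psi S μ (iota (eV t))‖ ^ 2) :=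
      mul_nonneg hμpos.le h3
    nlinarith [hpp, h1, h3, hμ1, hμpos, hμd]
  have herr : μ * ((‖S (eU t)‖ ^ 2 + ‖eV t‖ ^ 2)
      - (‖Phi S μ (iota (eU t))‖ ^ 2 + ‖Psi S μ (iota (eV t))‖ ^ 2)) ≤ C := by
    rw [hC]
    nlinarith [hconva, hconvb]
  have hμδ : C + δ ≤ μ * δ := by
    have h1 : (C + δ) / δ ≤ μ := le_max_right _ _
    calc C + δ = ((C + δ) / δ) * δ := by field_simp
      _ ≤ μ * δ := mul_le_mul_of_nonneg_right h1 hδpos.le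
  have hEt : ‖S (eU t)‖ ^ 2 + ‖eV t‖ ^ 2
      ≤ (‖Phi S μ (iota (eU t))‖ ^ 2 + ‖Psi S μ (iota (eV t))‖ ^ 2) + δ := by
    by_contra hlt
    push_neg at hlt
    have hgt : δ < (‖S (eU t)‖ ^ 2 + ‖eV t‖ ^ 2)
        - (‖Phi S μ (iota (eU t))‖ ^ 2 + ‖Psi S μ (iota (eV t))‖ ^ 2) := by linarith
    have hmul := mul_lt_mul_of_pos_left hgt hμpos
    linarith [herr, hμδ]
  -- the Grönwall step
  have hgr := gronwall_step S μ A hSsym hSS hμpos T hT eU eV eU' eV' R1 R2 Rf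
    hU hV heq1 heq2 hRint δ hδpos t ht
  -- initial mollified energy is below the true one
  have h0U : ‖Phi S μ (iota (eU 0))‖ ^ 2 ≤ ‖S (eU 0)‖ ^ 2 :=
    pow_le_pow_left₀ (norm_nonneg _) (norm_Phi_le S μ hμpos _) 2
  have h0V : ‖Psi S μ (iota (eV 0))‖ ^ 2 ≤ ‖eV 0‖ ^ 2 := by
    have h := norm_Psi_le S μ hμpos (iota (eV 0))
    rw [norm_iota] at h
    exact pow_le_pow_left₀ (norm_nonneg _) h 2
  have hs0 : Real.sqrt (‖Phi S μ (iota (eU 0))‖ ^ 2 + ‖Psi S μ (iota (eV 0))‖ ^ 2 + δ)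
      ≤ Real.sqrt (E0 + δ) := by
    apply Real.sqrt_le_sqrt
    rw [hE0def]
    linarith
  have hsE : Real.sqrt (E0 + δ) ≤ Real.sqrt E0 + Real.sqrt δ := by
    have h1 : E0 + δ ≤ (Real.sqrt E0 + Real.sqrt δ) ^ 2 := by
      nlinarith [Real.sq_sqrt hE0, Real.sq_sqrt hδpos.le,
        mul_nonneg (Real.sqrt_nonneg E0) (Real.sqrt_nonneg δ)]
    calc Real.sqrt (E0 + δ) ≤ Real.sqrt ((Real.sqrt E0 + Real.sqrt δ) ^ 2) :=
          Real.sqrt_le_sqrt h1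
      _ = Real.sqrt E0 + Real.sqrt δ := Real.sqrt_sq
          (add_nonneg (Real.sqrt_nonneg _) (Real.sqrt_nonneg _))
  have hchain : (‖Phi S μ (iota (eU t))‖ ^ 2 + ‖Psi S μ (iota (eV t))‖ ^ 2) + δ
      ≤ (B + Real.sqrt δ) ^ 2 := by
    have h1 : Real.sqrt (‖Phi S μ (iota (eU 0))‖ ^ 2 + ‖Psi S μ (iota (eV 0))‖ ^ 2 + δ) + I
        ≤ B + Real.sqrt δ := by
      rw [hB]
      linarith [hs0, hsE]
    have h2 : 0 ≤ Real.sqrt (‖Phi S μ (iota (eU 0))‖ ^ 2 + ‖Psi S μ (iota (eV 0))‖ ^ 2 + δ) + I :=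
      add_nonneg (Real.sqrt_nonneg _) hI0
    calc (‖Phi S μ (iota (eU t))‖ ^ 2 + ‖Psi S μ (iota (eV t))‖ ^ 2) + δ
        ≤ (Real.sqrt (‖Phi S μ (iota (eU 0))‖ ^ 2 + ‖Psi S μ (iota (eV 0))‖ ^ 2 + δ) + I) ^ 2 := hgr
      _ ≤ (B + Real.sqrt δ) ^ 2 := pow_le_pow_left₀ h2 h1 2
  have h2B : (2 * B + 2) * Real.sqrt δ ≤ η := by
    calc (2 * B + 2) * Real.sqrt δ ≤ (2 * B + 2) * (η / (2 * B + 2)) :=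
          mul_le_mul_of_nonneg_left hsqrtδ hposB.le
      _ = η := by field_simp
  have hfin : (B + Real.sqrt δ) ^ 2 ≤ B ^ 2 + η := by
    nlinarith [hδsqrt, Real.sq_sqrt hδpos.le, Real.sqrt_nonneg δ, hBnn, h2B]
  linarith [hEt, hchain, hfin]
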